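/- (Corollary 2.7, polytope case) Let A be a finite set of vectors in a finite-dimensional real vector space V and Z(A) its zonotope. If a polytope P is a weak Minkowski summand of Z(A) (there exist a polytope Q and k > 0 with P + Q = k·Z(A)), then every face of P is also a weak Minkowski summand of Z(A); i.e., every face of a deformation of Z(A) is a deformation of Z(A). -/
import Mathlib


open scoped Pointwise

/-- A polytope: the convex hull of a nonempty finite subset. -/
def IsPolytope {V : Type*} [AddCommGroup V] [Module ℝ V] (P : Set V) : Prop :=
  ∃ S : Finset V, S.Nonempty ∧ P = convexHull ℝ (S : Set V)

/-- `F` is a face of `P`: the subset of `P` where some linear functional attains its maximum. -/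
def IsFaceOfL {V : Type*} [AddCommGroup V] [Module ℝ V] (P F : Set V) : Prop :=
  ∃ u : V →ₗ[ℝ] ℝ, F = {v ∈ P | ∀ x ∈ P, u x ≤ u v}

section Aux

variable {V : Type*} [AddCommGroup V] [Module ℝ V]

/-- The face of a set in direction `u`. -/
def faceSet (u : V →ₗ[ℝ] ℝ) (A : Set V) : Set V := {v ∈ A | ∀ x ∈ A, u x ≤ u v}

lemma faceSet_add (u : V →ₗ[ℝ] ℝ) (A B : Set V) :
    faceSet u (A + B) = faceSet u A + faceSet u B := by
  ext z
  constructor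
  · rintro ⟨⟨a, ha, b, hb, rfl⟩, hmax⟩
    refine ⟨a, ⟨ha, fun x hx => ?_⟩, b, ⟨hb, fun y hy => ?_⟩, rfl⟩
    · have := hmax (x + b) ⟨x, hx, b, hb, rfl⟩
      simpa using this
    · have := hmax (a + y) ⟨a, ha, y, hy, rfl⟩
      simpa using this
  · rintro ⟨a, ⟨ha, hamax⟩, b, ⟨hb, hbmax⟩, rfl⟩
    refine ⟨⟨a, ha, b, hb, rfl⟩, ?_⟩
    rintro x ⟨p, hp, q, hq, rfl⟩
    simp only [map_add]
    exact add_le_add (hamax p hp) (hbmax q hq)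

lemma faceSet_smul (u : V →ₗ[ℝ] ℝ) {k : ℝ} (hk : 0 < k) (A : Set V) :
    faceSet u (k • A) = k • faceSet u A := by
  ext z
  constructor
  · rintro ⟨⟨a, ha, rfl⟩, hmax⟩
    refine ⟨a, ⟨ha, fun x hx => ?_⟩, rfl⟩
    have := hmax (k • x) ⟨x, hx, rfl⟩
    simp only [map_smul, smul_eq_mul] at this
    exact le_of_mul_le_mul_left this hk
  · rintro ⟨a, ⟨ha, hamax⟩, rfl⟩
    refine ⟨⟨a, ha, rfl⟩, ?_⟩
    rintro x ⟨y, hy, rfl⟩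
    simp only [map_smul, smul_eq_mul]
    exact mul_le_mul_of_nonneg_left (hamax y hy) hk.le

lemma faceSet_zero (u : V →ₗ[ℝ] ℝ) : faceSet u (0 : Set V) = 0 := by
  ext z
  simp only [faceSet, Set.mem_zero, Set.mem_setOf_eq]
  constructor
  · rintro ⟨h, -⟩; exact h
  · rintro rfl; exact ⟨rfl, by rintro x rfl; exact le_refl _⟩

lemma faceSet_sum (u : V →ₗ[ℝ] ℝ) {ι : Type*} (s : Finset ι) (f : ι → Set V) :
    faceSet u (∑ i ∈ s, f i) = ∑ i ∈ s, faceSet u (f i) := by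
  induction s using Finset.cons_induction with
  | empty => simpa using faceSet_zero u
  | cons i s hi ih => rw [Finset.sum_cons, Finset.sum_cons, faceSet_add, ih]

lemma faceSet_hull (u : V →ₗ[ℝ] ℝ) (S : Finset V) (hS : S.Nonempty) :
    faceSet u (convexHull ℝ (S : Set V)) =
      convexHull ℝ ((S.filter fun s => ∀ x ∈ S, u x ≤ u s : Finset V) : Set V) := by
  obtain ⟨m, hmS, hm⟩ := S.exists_max_image u hS
  set T := S.filter fun s => ∀ x ∈ S, u x ≤ u s with hT
  have hTS : T ⊆ S := Finset.filter_subset _ _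
  have hmT : m ∈ T := Finset.mem_filter.2 ⟨hmS, hm⟩
  -- every point of the hull has u-value ≤ u m
  have hub : ∀ v ∈ convexHull ℝ (S : Set V), u v ≤ u m := by
    intro v hv
    have : convexHull ℝ (S : Set V) ⊆ {x | u x ≤ u m} := by
      apply convexHull_min
      · intro x hx; exact hm x hx
      · exact convex_halfSpace_le u.isLinear (u m)
    exact this hv
  -- points of T have u-value exactly u m
  have hTval : ∀ s ∈ T, u s = u m := fun s hs =>
    le_antisymm (hm s (hTS hs)) ((Finset.mem_filter.1 hs).2 m hmS)
  ext v
  constructor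
  · rintro ⟨hvS, hmax⟩
    have hvm : u v = u m :=
      le_antisymm (hub v hvS) (hmax m (subset_convexHull ℝ _ hmS))
    have hvS' := hvS
    rw [Finset.convexHull_eq] at hvS'
    obtain ⟨w, hw0, hw1, hwc⟩ := hvS'
    -- u v = ∑ w i * u i
    have hsum : ∑ i ∈ S, w i * u i = u m := by
      have h := congrArg u hwc
      rw [Finset.centerMass, hw1, inv_one, one_smul, map_sum] at h
      simp only [map_smul, smul_eq_mul, id] at h
      rw [h, hvm]
    have hzero : ∀ i ∈ S, w i * (u m - u i) = 0 := by
      have hsum' : ∑ i ∈ S, w i * (u m - u i) = 0 := by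
        have : ∑ i ∈ S, w i * (u m - u i) = (∑ i ∈ S, w i) * u m - ∑ i ∈ S, w i * u i := by
          rw [Finset.sum_mul, ← Finset.sum_sub_distrib]
          congr 1; ext i; ring
        rw [this, hw1, one_mul, hsum, sub_self]
      have hnn : ∀ i ∈ S, 0 ≤ w i * (u m - u i) := fun i hi =>
        mul_nonneg (hw0 i hi) (sub_nonneg.2 (hm i hi))
      exact fun i hi => (Finset.sum_eq_zero_iff_of_nonneg hnn).1 hsum' i hi
    have hwT : ∀ i ∈ S, i ∉ T → w i = 0 := by
      intro i hi hiT
      by_contra hwi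
      have : u m - u i = 0 := by
        rcases mul_eq_zero.1 (hzero i hi) with h | h
        · exact absurd h hwi
        · exact h
      have hui : u i = u m := by linarith [sub_eq_zero.1 this]
      exact hiT (Finset.mem_filter.2 ⟨hi, fun x hx => (hui ▸ hm x hx : u x ≤ u i)⟩)
    rw [Finset.convexHull_eq]
    refine ⟨w, fun i hi => hw0 i (hTS hi), ?_, ?_⟩
    · rw [← hw1]; exact (Finset.sum_subset hTS (fun i hi hiT => hwT i hi hiT)).symm ▸ rfl
    · rw [← hwc]
      unfold Finset.centerMass
      have h1 : ∑ i ∈ T, w i = 1 := by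
        rw [← hw1]; exact Finset.sum_subset hTS (fun i hi hiT => hwT i hi hiT)
      rw [h1, hw1, inv_one, one_smul, one_smul]
      exact Finset.sum_subset hTS (fun i hi hiT => by rw [hwT i hi hiT, zero_smul])
  · intro hv
    have hvS : v ∈ convexHull ℝ (S : Set V) :=
      convexHull_mono (by exact_mod_cast hTS) hv
    have hvm : u v = u m := by
      have : convexHull ℝ (T : Set V) ⊆ {x | u x = u m} := by
        apply convexHull_min
        · intro x hx; exact hTval x hx
        · exact convex_hyperplane u.isLinear (u m)
      exact this hv
    exact ⟨hvS, fun x hx => hvm ▸ hub x hx⟩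

lemma isPolytope_segment (a b : V) : IsPolytope (segment ℝ a b) := by
  classical
  exact ⟨{a, b}, ⟨a, by simp⟩, by rw [← convexHull_pair]; norm_cast⟩

lemma isPolytope_singleton (a : V) : IsPolytope ({a} : Set V) :=
  ⟨{a}, ⟨a, by simp⟩, by simp⟩

lemma IsPolytope.add {P Q : Set V} (hP : IsPolytope P) (hQ : IsPolytope Q) :
    IsPolytope (P + Q) := by
  classical
  obtain ⟨S, hS, rfl⟩ := hP
  obtain ⟨T, hT, rfl⟩ := hQ
  exact ⟨S + T, hS.add hT, by rw [Finset.coe_add, convexHull_add]⟩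

lemma IsPolytope.smul {P : Set V} (hP : IsPolytope P) (k : ℝ) : IsPolytope (k • P) := by
  classical
  obtain ⟨S, hS, rfl⟩ := hP
  exact ⟨k • S, hS.smul_finset, by rw [Finset.coe_smul_finset, convexHull_smul]⟩

lemma isPolytope_zero : IsPolytope (0 : Set V) := by
  have := isPolytope_singleton (0 : V)
  rwa [Set.singleton_zero] at this

lemma IsPolytope.sum {ι : Type*} (s : Finset ι) (f : ι → Set V)
    (hf : ∀ i ∈ s, IsPolytope (f i)) : IsPolytope (∑ i ∈ s, f i) := by
  induction s using Finset.cons_induction with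
  | empty => simpa using isPolytope_zero
  | cons i s hi ih =>
    rw [Finset.sum_cons]
    exact (hf i (Finset.mem_cons_self i s)).add (ih fun j hj => hf j (Finset.mem_cons.2 (Or.inr hj)))

lemma IsPolytope.faceSet (u : V →ₗ[ℝ] ℝ) {P : Set V} (hP : IsPolytope P) :
    IsPolytope (faceSet u P) := by
  classical
  obtain ⟨S, hS, rfl⟩ := hP
  obtain ⟨m, hm, hmax⟩ := S.exists_max_image u hS
  exact ⟨S.filter fun s => ∀ x ∈ S, u x ≤ u s,
    ⟨m, Finset.mem_filter.2 ⟨hm, hmax⟩⟩, faceSet_hull u S hS⟩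

lemma mem_segment_zero {v x : V} : x ∈ segment ℝ 0 v ↔ ∃ t : ℝ, 0 ≤ t ∧ t ≤ 1 ∧ t • v = x := by
  rw [segment_eq_image]
  constructor
  · rintro ⟨t, ⟨ht0, ht1⟩, rfl⟩
    exact ⟨t, ht0, ht1, by simp⟩
  · rintro ⟨t, ht0, ht1, rfl⟩
    exact ⟨t, ⟨ht0, ht1⟩, by simp⟩

lemma exists_complement (u : V →ₗ[ℝ] ℝ) (v : V) :
    ∃ g : Set V, IsPolytope g ∧ faceSet u (segment ℝ 0 v) + g = segment ℝ 0 v := by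
  rcases lt_trichotomy (u v) 0 with hv | hv | hv
  · -- face is {0}
    refine ⟨segment ℝ 0 v, isPolytope_segment 0 v, ?_⟩
    have hface : faceSet u (segment ℝ 0 v) = {0} := by
      ext x
      constructor
      · rintro ⟨hx, hmax⟩
        obtain ⟨t, ht0, ht1, rfl⟩ := mem_segment_zero.1 hx
        have h0 := hmax 0 (left_mem_segment ℝ 0 v)
        simp only [map_zero, map_smul, smul_eq_mul] at h0
        have : t * u v ≤ 0 := mul_nonpos_of_nonneg_of_nonpos ht0 hv.le
        have ht : t = 0 := by
          by_contra ht
          have : t * u v < 0 := mul_neg_of_pos_of_neg (lt_of_le_of_ne ht0 (Ne.symm ht)) hv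
          linarith
        simp [ht]
      · rintro rfl
        refine ⟨left_mem_segment ℝ 0 v, ?_⟩
        intro x hx
        obtain ⟨t, ht0, ht1, rfl⟩ := mem_segment_zero.1 hx
        simp only [map_zero, map_smul, smul_eq_mul]
        exact mul_nonpos_of_nonneg_of_nonpos ht0 hv.le
    rw [hface, Set.singleton_zero, zero_add]
  · -- face is the whole segment
    refine ⟨(0 : Set V), isPolytope_zero, ?_⟩
    have hface : faceSet u (segment ℝ 0 v) = segment ℝ 0 v := by
      ext x
      constructor
      · exact fun h => h.1
      · intro hx
        refine ⟨hx, fun y hy => ?_⟩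
        obtain ⟨t, _, _, rfl⟩ := mem_segment_zero.1 hy
        obtain ⟨s, _, _, rfl⟩ := mem_segment_zero.1 hx
        simp [map_smul, hv]
    rw [hface, add_zero]
  · -- face is {v}
    refine ⟨segment ℝ (-v) 0, isPolytope_segment _ _, ?_⟩
    have hface : faceSet u (segment ℝ 0 v) = {v} := by
      ext x
      constructor
      · rintro ⟨hx, hmax⟩
        obtain ⟨t, ht0, ht1, rfl⟩ := mem_segment_zero.1 hx
        have h1 := hmax v (right_mem_segment ℝ 0 v)
        simp only [map_smul, smul_eq_mul] at h1
        have ht : t = 1 := by nlinarith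
        simp [ht]
      · rintro rfl
        refine ⟨right_mem_segment ℝ 0 _, fun y hy => ?_⟩
        obtain ⟨t, ht0, ht1, rfl⟩ := mem_segment_zero.1 hy
        simp only [map_smul, smul_eq_mul]
        nlinarith
    rw [hface, Set.singleton_add]
    rw [segment_translate_image]
    simp

end Aux

/-- **Corollary 2.7 (polytope case)**: if a polytope `P` is a weak Minkowski summand of the
zonotope `Z(A)` (i.e. a deformation of `Z(A)`), then every face of `P` is also a weak
Minkowski summand of `Z(A)`. -/
theorem face_of_zonotope_summand_is_summand
    {V : Type*} [AddCommGroup V] [Module ℝ V] [FiniteDimensional ℝ V]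
    (A : Finset V) (P : Set V) (hP : IsPolytope P)
    (Q : Set V) (hQ : IsPolytope Q) (k : ℝ) (hk : 0 < k)
    (hPQ : P + Q = k • ∑ v ∈ A, segment ℝ 0 v)
    (F : Set V) (hF : IsFaceOfL P F) :
    ∃ Q' : Set V, IsPolytope Q' ∧ ∃ k' : ℝ, 0 < k' ∧
      F + Q' = k' • ∑ v ∈ A, segment ℝ 0 v := by
  obtain ⟨u, hFu⟩ := hF
  have hFu' : F = faceSet u P := hFu
  choose g hgpoly hgface using fun v : V => exists_complement u v
  refine ⟨faceSet u Q + k • ∑ v ∈ A, g v, ?_, k, hk, ?_⟩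
  · exact (hQ.faceSet u).add ((IsPolytope.sum A g fun i _ => hgpoly i).smul k)
  · calc F + (faceSet u Q + k • ∑ v ∈ A, g v)
        = (faceSet u P + faceSet u Q) + k • ∑ v ∈ A, g v := by rw [hFu', add_assoc]
      _ = faceSet u (P + Q) + k • ∑ v ∈ A, g v := by rw [faceSet_add]
      _ = k • faceSet u (∑ v ∈ A, segment ℝ 0 v) + k • ∑ v ∈ A, g v := by
            rw [hPQ, faceSet_smul u hk]
      _ = k • (faceSet u (∑ v ∈ A, segment ℝ 0 v) + ∑ v ∈ A, g v) := (smul_add k _ _).symm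
      _ = k • (∑ v ∈ A, faceSet u (segment ℝ 0 v) + ∑ v ∈ A, g v) := by rw [faceSet_sum]
      _ = k • ∑ v ∈ A, (faceSet u (segment ℝ 0 v) + g v) := by rw [Finset.sum_add_distrib]
      _ = k • ∑ v ∈ A, segment ℝ 0 v := by
            congr 1
            exact Finset.sum_congr rfl fun v _ => hgface v
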